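/- Let f be a decreasing C¹ function on [0,T] extended by f(τ)=f(0) for τ<0, satisfying (1/ε)∫_{t-ε}^t f(τ)dτ - f(t) ≤ C₀ ε^α for all ε>0, t∈[0,T]. Then for every t ∈ [0,T] and ε > 0, (1/2) ∫_{t-ε/2}^{t} (-f'(s)) ds ≤ C₀ ε^α; consequently f(s) - f(t) ≤ 2^{1+α} C₀ (t-s)^α for s < t. -/

import Mathlib

open MeasureTheory intervalIntegral
open Set

/-- For a decreasing `C¹` function `f` on `[0,T]` (extended by `f(0)` for negative times)
satisfying the averaged bound `(1/ε)∫_{t-ε}^t f - f(t) ≤ C₀ ε^α`, one has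
`(1/2) ∫_{t-ε/2}^t (-f') ≤ C₀ ε^α`, and consequently `f(s) - f(t) ≤ 2^{1+α} C₀ (t-s)^α`
for `s < t`. -/
theorem stmt5 (T : ℝ) (hT : 0 < T) (f : ℝ → ℝ)
    (hf : ContDiffOn ℝ 1 f (Set.Icc 0 T)) (hmono : ∀ t ∈ Set.Icc (0 : ℝ) T, deriv f t ≤ 0)
    (C₀ α : ℝ) (hC₀ : 0 < C₀) (hα : 0 < α) (hα1 : α < 1)
    (h : ∀ ε > (0 : ℝ), ∀ t ∈ Set.Icc (0 : ℝ) T,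
      (1 / ε) * (∫ τ in (t - ε)..t, f (max τ 0)) - f t ≤ C₀ * ε ^ α) :
    (∀ t ∈ Set.Icc (0 : ℝ) T, ∀ ε > (0 : ℝ),
      (1 / 2) * (∫ s in (t - ε / 2)..t, -(deriv (fun τ => f (max τ 0)) s)) ≤ C₀ * ε ^ α) ∧
    (∀ s ∈ Set.Icc (0 : ℝ) T, ∀ t ∈ Set.Icc (0 : ℝ) T, s < t →
      f s - f t ≤ 2 ^ (1 + α) * C₀ * (t - s) ^ α) := by
  set g : ℝ → ℝ := fun τ => f (max τ 0) with hg
  have hfc : ContinuousOn f (Icc 0 T) := hf.continuousOn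
  have hD : ContinuousOn (derivWithin f (Icc 0 T)) (Icc 0 T) :=
    hf.continuousOn_derivWithin (uniqueDiffOn_Icc hT) le_rfl
  have hderivAt : ∀ s ∈ Ioo (0:ℝ) T, HasDerivAt f (deriv f s) s := by
    intro s hs
    exact (((hf.differentiableOn one_ne_zero) s (Ioo_subset_Icc_self hs)).differentiableAt
      (Icc_mem_nhds hs.1 hs.2)).hasDerivAt
  have hgf : ∀ s : ℝ, 0 < s → deriv g s = deriv f s := by
    intro s hs
    have : g =ᶠ[nhds s] f := by
      filter_upwards [Ioi_mem_nhds hs] with τ hτ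
      simp [g, max_eq_left (le_of_lt (mem_Ioi.mp hτ))]
    exact this.deriv_eq
  have hg0 : ∀ s : ℝ, s < 0 → deriv g s = 0 := by
    intro s hs
    have : g =ᶠ[nhds s] (fun _ => f 0) := by
      filter_upwards [Iio_mem_nhds hs] with τ hτ
      simp [g, max_eq_right (le_of_lt (mem_Iio.mp hτ))]
    rw [this.deriv_eq]; simp
  have hneT : ∀ᵐ x : ℝ, x ≠ T := ae_iff.mpr (by simp)
  have hne0 : ∀ᵐ x : ℝ, x ≠ (0:ℝ) := ae_iff.mpr (by simp)
  -- FTC on [b,t] ⊆ [0,T]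
  have hDf_eq : ∀ s ∈ Ioo (0:ℝ) T, derivWithin f (Icc 0 T) s = deriv f s := by
    intro s hs
    exact derivWithin_of_mem_nhds (Icc_mem_nhds hs.1 hs.2)
  have hFTC : ∀ b t : ℝ, 0 ≤ b → b ≤ t → t ≤ T →
      (∫ s in b..t, derivWithin f (Icc 0 T) s) = f t - f b := by
    intro b t hb hbt htT
    refine integral_eq_sub_of_hasDeriv_right_of_le hbt (hfc.mono ?_) ?_
      ((hD.mono ?_).intervalIntegrable)
    · exact Icc_subset_Icc hb htT
    · intro x hx
      have hx' : x ∈ Ioo (0:ℝ) T := ⟨lt_of_le_of_lt hb hx.1, lt_of_lt_of_le hx.2 htT⟩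
      rw [hDf_eq x hx']
      exact (hderivAt x hx').hasDerivWithinAt
    · rw [uIcc_of_le hbt]; exact Icc_subset_Icc hb htT

  -- integrability of deriv g on [b,t] ⊆ [0,T]
  have hgint : ∀ b t : ℝ, 0 ≤ b → b ≤ t → t ≤ T →
      IntervalIntegrable (deriv g) volume b t := by
    intro b t hb hbt htT
    rw [intervalIntegrable_iff_integrableOn_Ioc_of_le hbt]
    have hDI : IntegrableOn (derivWithin f (Icc 0 T)) (Ioc b t) := by
      have := (hD.mono (show uIcc b t ⊆ Icc 0 T by
        rw [uIcc_of_le hbt]; exact Icc_subset_Icc hb htT)).intervalIntegrable (μ := volume)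
      exact (intervalIntegrable_iff_integrableOn_Ioc_of_le hbt).mp this
    refine hDI.congr_fun_ae ?_
    refine (ae_restrict_iff' measurableSet_Ioc).2 ?_
    filter_upwards [hneT] with s hsne hs
    have hs' : s ∈ Ioo (0:ℝ) T :=
      ⟨lt_of_le_of_lt hb hs.1, lt_of_le_of_ne (le_trans hs.2 htT) hsne⟩
    rw [hDf_eq s hs', hgf s hs'.1]
  have hIb : ∀ b t : ℝ, 0 ≤ b → b ≤ t → t ≤ T →
      (∫ s in b..t, deriv g s) = f t - f b := by
    intro b t hb hbt htT
    rw [← hFTC b t hb hbt htT]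
    refine integral_congr_ae ?_
    rw [uIoc_of_le hbt]
    filter_upwards [hneT] with s hsne hs
    have hs' : s ∈ Ioo (0:ℝ) T :=
      ⟨lt_of_le_of_lt hb hs.1, lt_of_le_of_ne (le_trans hs.2 htT) hsne⟩
    rw [hgf s hs'.1, hDf_eq s hs']
  -- negative part
  have hgint0 : ∀ a : ℝ, a ≤ 0 → IntervalIntegrable (deriv g) volume a 0 := by
    intro a ha
    rw [intervalIntegrable_iff_integrableOn_Ioc_of_le ha]
    refine (integrableOn_zero (ε' := ℝ)).congr_fun_ae ?_
    refine (ae_restrict_iff' measurableSet_Ioc).2 ?_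
    filter_upwards [hne0] with s hsne hs
    exact (hg0 s (lt_of_le_of_ne hs.2 hsne)).symm
  have hIb0 : ∀ a : ℝ, a ≤ 0 → (∫ s in a..(0:ℝ), deriv g s) = 0 := by
    intro a ha
    have heq : (∫ s in a..(0:ℝ), deriv g s) = ∫ s in a..(0:ℝ), (0:ℝ) := by
      refine integral_congr_ae ?_
      rw [uIoc_of_le ha]
      filter_upwards [hne0] with s hsne hs
      exact hg0 s (lt_of_le_of_ne hs.2 hsne)
    simpa using heq
  -- combined identity
  have keyA : ∀ t ∈ Icc (0:ℝ) T, ∀ a : ℝ, a ≤ t →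
      (∫ s in a..t, deriv g s) = f t - f (max a 0) := by
    intro t ht a hat
    rcases le_or_gt 0 a with ha | ha
    · rw [max_eq_left ha]; exact hIb a t ha hat ht.2
    · rw [max_eq_right ha.le]
      rw [← integral_add_adjacent_intervals (b := (0:ℝ)) (hgint0 a ha.le)
        (hgint 0 t le_rfl ht.1 ht.2), hIb0 a ha.le, hIb 0 t le_rfl ht.1 ht.2, zero_add]
  have hanti : AntitoneOn f (Icc 0 T) := by
    refine antitoneOn_of_deriv_nonpos (convex_Icc 0 T) hfc
      ((hf.differentiableOn one_ne_zero).mono interior_subset) fun x hx => hmono x (interior_subset hx)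
  have hgcont : ContinuousOn g (Iic T) := by
    refine hfc.comp ((continuous_id.max continuous_const).continuousOn) ?_
    intro τ hτ
    exact ⟨le_max_right _ _, max_le (mem_Iic.mp hτ) hT.le⟩
  have hganti : AntitoneOn g (Iic T) := by
    intro x hx y hy hxy
    exact hanti ⟨le_max_right _ _, max_le (mem_Iic.mp hx) hT.le⟩
      ⟨le_max_right _ _, max_le (mem_Iic.mp hy) hT.le⟩ (max_le_max hxy le_rfl)
  have keyB : ∀ t ∈ Icc (0:ℝ) T, ∀ ε > (0:ℝ),
      f (max (t - ε/2) 0) - f t ≤ 2 * (C₀ * ε ^ α) := by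
    intro t ht ε hε
    set a := t - ε/2 with ha
    have h1 : t - ε ≤ a := by rw [ha]; linarith
    have h2 : a ≤ t := by rw [ha]; linarith
    have hint1 : IntervalIntegrable g volume (t - ε) a := by
      apply ContinuousOn.intervalIntegrable
      apply hgcont.mono
      rw [uIcc_of_le h1]
      intro x hx
      exact mem_Iic.mpr (le_trans hx.2 (le_trans h2 ht.2))
    have hint2 : IntervalIntegrable g volume a t := by
      apply ContinuousOn.intervalIntegrable
      apply hgcont.mono
      rw [uIcc_of_le h2]
      intro x hx
      exact mem_Iic.mpr (le_trans hx.2 ht.2)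
    have hI1 : (ε/2) * g a ≤ ∫ τ in (t - ε)..a, g τ := by
      have := integral_mono_on h1 (_root_.intervalIntegrable_const (c := g a)) hint1
        (fun x hx => hganti (mem_Iic.mpr (le_trans hx.2 (le_trans h2 ht.2)))
          (mem_Iic.mpr (le_trans h2 ht.2)) hx.2)
      simpa [smul_eq_mul, show a - (t - ε) = ε/2 by rw [ha]; ring] using this
    have hI2 : (ε/2) * g t ≤ ∫ τ in a..t, g τ := by
      have := integral_mono_on h2 (_root_.intervalIntegrable_const (c := g t)) hint2
        (fun x hx => hganti (mem_Iic.mpr (le_trans hx.2 ht.2)) (mem_Iic.mpr ht.2) hx.2)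
      simpa [smul_eq_mul, show t - a = ε/2 by rw [ha]; ring] using this
    have hsplit : (∫ τ in (t - ε)..t, g τ) = (∫ τ in (t - ε)..a, g τ) + ∫ τ in a..t, g τ :=
      (integral_add_adjacent_intervals hint1 hint2).symm
    have hmain := h ε hε t ht
    have hgt : g t = f t := by simp [g, max_eq_left ht.1]
    have hIlow : (ε/2) * (g a + g t) ≤ ∫ τ in (t - ε)..t, g τ := by
      rw [hsplit]; rw [mul_add]; exact add_le_add hI1 hI2
    have hmul := mul_le_mul_of_nonneg_left hIlow (le_of_lt (by positivity : (0:ℝ) < 1/ε))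
    have heq : (1/ε) * ((ε/2) * (g a + g t)) = (g a + g t)/2 := by
      field_simp
    have hga : g a = f (max a 0) := rfl
    rw [heq] at hmul
    rw [← hga]
    linarith
  constructor
  · intro t ht ε hε
    have hat : t - ε/2 ≤ t := by linarith
    have hid : (∫ s in (t - ε/2)..t, -(deriv g s)) = f (max (t - ε/2) 0) - f t := by
      rw [intervalIntegral.integral_neg, keyA t ht _ hat]; ring
    rw [hid]
    have hB := keyB t ht ε hε
    linarith
  · intro s hs t ht hst
    have hε : (0:ℝ) < 2*(t-s) := by linarith
    have hB := keyB t ht (2*(t-s)) hε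
    rw [show t - 2*(t-s)/2 = s by ring, max_eq_left hs.1] at hB
    have hpow : (2*(t-s)) ^ α = 2 ^ α * (t-s) ^ α :=
      Real.mul_rpow (by norm_num) (by linarith)
    have h2 : (2:ℝ) ^ (1+α) = 2 * 2 ^ α := by
      rw [Real.rpow_add (by norm_num : (0:ℝ) < 2), Real.rpow_one]
    rw [hpow] at hB
    rw [h2]
    have : 2 * (C₀ * (2 ^ α * (t-s) ^ α)) = 2 * 2 ^ α * C₀ * (t-s) ^ α := by ring
    linarith
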